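/- Let n ≥ 3, k ≥ 1, σ₁,…,σ_k > 0, p = 2, and suppose D := σ₁⋯σ_k − 1 > 0. Suppose positive functions m₁,…,m_k on (r₀,∞) satisfy m_{i+1}(r) ≥ c r² m_i(r)^{σ_i} for all i (indices mod k) and all large r, and that m₁ is bounded above. Then m₁(r) ≤ C r^{-A/(B-1)} for large r, where B = σ₁σ₂⋯σ_k and A = 2(1 + σ_k + σ_kσ_{k-1} + ⋯ + σ_kσ_{k-1}⋯σ₂). -/

import Mathlib

private lemma S_rec_aux (σ : ℕ → ℝ) (j : ℕ) (hj : 1 ≤ j) :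
    1 + ∑ i ∈ Finset.range ((j + 1) - 1), ∏ l ∈ Finset.range (i + 1), σ (j + 1 - l)
      = 1 + σ (j + 1) *
        (1 + ∑ i ∈ Finset.range (j - 1), ∏ l ∈ Finset.range (i + 1), σ (j - l)) := by
  obtain ⟨p, rfl⟩ := Nat.exists_eq_add_of_le hj
  have h1 : (1 + p + 1) - 1 = p + 1 := by omega
  rw [h1]
  have hprod : ∀ i : ℕ, ∏ l ∈ Finset.range (i + 1), σ (1 + p + 1 - l)
      = (∏ l ∈ Finset.range i, σ (1 + p - l)) * σ (1 + p + 1) := by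
    intro i
    rw [Finset.prod_range_succ']
    congr 1
    apply Finset.prod_congr rfl
    intro l _
    congr 1
    omega
  have hsum : ∑ i ∈ Finset.range (p + 1), ∏ l ∈ Finset.range (i + 1), σ (1 + p + 1 - l)
      = (∑ i ∈ Finset.range (p + 1), ∏ l ∈ Finset.range i, σ (1 + p - l)) * σ (1 + p + 1) := by
    rw [Finset.sum_mul]
    exact Finset.sum_congr rfl fun i _ => hprod i
  rw [hsum, Finset.sum_range_succ']
  have h2 : (1 + p) - 1 = p := by omega
  rw [h2]
  simp [Finset.prod_range_zero]
  ring

theorem stmt_19 (n : ℕ) (hn : 3 ≤ n) (k : ℕ) (hk : 1 ≤ k)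
    (σ : ℕ → ℝ) (hσ : ∀ i ∈ Finset.Icc 1 k, 0 < σ i)
    (hD : 0 < (∏ i ∈ Finset.range k, σ (i + 1)) - 1)
    (r₀ r₁ c M : ℝ) (hr₀ : 0 < r₀) (hr₁ : r₀ < r₁) (hc : 0 < c) (hM : 0 < M)
    (m : ℕ → ℝ → ℝ)
    (hcyc : ∀ r : ℝ, m (k + 1) r = m 1 r)
    (hmpos : ∀ i ∈ Finset.Icc 1 k, ∀ r : ℝ, r₀ < r → 0 < m i r)
    (hchain : ∀ i ∈ Finset.Icc 1 k, ∀ r : ℝ, r₁ ≤ r →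
      c * r ^ 2 * m i r ^ σ i ≤ m (i + 1) r)
    (hbound : ∀ r : ℝ, r₁ ≤ r → m 1 r ≤ M) :
    let B : ℝ := ∏ i ∈ Finset.range k, σ (i + 1)
    let A : ℝ := 2 * (1 + ∑ i ∈ Finset.range (k - 1), ∏ l ∈ Finset.range (i + 1), σ (k - l))
    ∃ C r₂ : ℝ, 0 < C ∧ r₁ ≤ r₂ ∧ ∀ r : ℝ, r₂ ≤ r →
      m 1 r ≤ C * r ^ (-(A / (B - 1))) := by
  intro B A
  set S : ℕ → ℝ := fun j =>
    1 + ∑ i ∈ Finset.range (j - 1), ∏ l ∈ Finset.range (i + 1), σ (j - l) with hSdef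
  set Bf : ℕ → ℝ := fun j => ∏ i ∈ Finset.range j, σ (i + 1) with hBdef
  have hA : A = 2 * S k := rfl
  have hB : B = Bf k := rfl
  have key : ∀ j : ℕ, 1 ≤ j → j ≤ k → ∀ r : ℝ, r₁ ≤ r →
      c ^ (S j) * r ^ (2 * S j) * (m 1 r) ^ (Bf j) ≤ m (j + 1) r := by
    intro j hj1
    induction j, hj1 using Nat.le_induction with
    | base =>
      intro hjk r hr
      have hr0 : (0:ℝ) < r := lt_trans hr₀ (lt_of_lt_of_le hr₁ hr)
      have hS1 : S 1 = 1 := by simp [hSdef]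
      have hB1 : Bf 1 = σ 1 := by simp [hBdef]
      rw [hS1, hB1, Real.rpow_one, mul_one]
      have hr2 : r ^ (2:ℝ) = r ^ (2:ℕ) := by
        rw [← Real.rpow_natCast r 2]; norm_num
      rw [hr2]
      exact hchain 1 (by simp [hk]) r hr
    | succ j hj1 ih =>
      intro hjk r hr
      have hr0 : (0:ℝ) < r := lt_trans hr₀ (lt_of_lt_of_le hr₁ hr)
      have hx : 0 < m 1 r := hmpos 1 (by simp [hk]) r (lt_of_lt_of_le hr₁ hr)
      have hσj : 0 < σ (j + 1) := hσ (j + 1) (by simp; omega)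
      have hIH := ih (by omega) r hr
      have hch := hchain (j + 1) (by simp; omega) r hr
      have hLnn : 0 ≤ c ^ (S j) * r ^ (2 * S j) * (m 1 r) ^ (Bf j) := by positivity
      have hpow : (c ^ (S j) * r ^ (2 * S j) * (m 1 r) ^ (Bf j)) ^ σ (j + 1)
          ≤ (m (j + 1) r) ^ σ (j + 1) :=
        Real.rpow_le_rpow hLnn hIH (le_of_lt hσj)
      have hexp : (c ^ (S j) * r ^ (2 * S j) * (m 1 r) ^ (Bf j)) ^ σ (j + 1)
          = c ^ (S j * σ (j+1)) * r ^ (2 * S j * σ (j+1)) * (m 1 r) ^ (Bf j * σ (j+1)) := by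
        rw [Real.mul_rpow (by positivity) (by positivity),
            Real.mul_rpow (by positivity) (by positivity),
            ← Real.rpow_mul (le_of_lt hc), ← Real.rpow_mul (le_of_lt hr0),
            ← Real.rpow_mul (le_of_lt hx)]
      have hSrec : S (j + 1) = 1 + σ (j + 1) * S j := S_rec_aux σ j hj1
      have hBrec : Bf (j + 1) = Bf j * σ (j + 1) := Finset.prod_range_succ _ _
      have hr2 : r ^ (2:ℝ) = r ^ (2:ℕ) := by
        rw [← Real.rpow_natCast r 2]; norm_num
      calc c ^ (S (j+1)) * r ^ (2 * S (j+1)) * (m 1 r) ^ (Bf (j+1))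
          = (c * r ^ (2:ℕ)) *
            (c ^ (S j * σ (j+1)) * r ^ (2 * S j * σ (j+1)) * (m 1 r) ^ (Bf j * σ (j+1))) := by
            rw [hSrec, hBrec]
            have e1 : (1 + σ (j+1) * S j) = 1 + S j * σ (j+1) := by ring
            have e2 : 2 * (1 + σ (j+1) * S j) = 2 + 2 * S j * σ (j+1) := by ring
            rw [e2, e1, Real.rpow_add hc, Real.rpow_add hr0, Real.rpow_one, hr2]
            ring
        _ ≤ (c * r ^ (2:ℕ)) * (m (j + 1) r) ^ σ (j + 1) := by
            apply mul_le_mul_of_nonneg_left _ (by positivity)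
            rw [← hexp]; exact hpow
        _ ≤ m (j + 1 + 1) r := hch
  refine ⟨c ^ (-(S k) / (B - 1)), r₁, Real.rpow_pos_of_pos hc _, le_refl _, ?_⟩
  intro r hr
  have hr0 : (0:ℝ) < r := lt_trans hr₀ (lt_of_lt_of_le hr₁ hr)
  have hx : 0 < m 1 r := hmpos 1 (by simp [hk]) r (lt_of_lt_of_le hr₁ hr)
  have hmain : c ^ (S k) * r ^ (2 * S k) * (m 1 r) ^ B ≤ m 1 r := by
    have := key k hk (le_refl k) r hr
    rwa [hcyc r, ← hB] at this
  set x := m 1 r with hxdef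
  set t := c ^ (S k) * r ^ (2 * S k) with htdef
  have ht : 0 < t := by positivity
  have h1 : x ^ B ≤ x / t := by
    rw [le_div_iff₀ ht]
    calc x ^ B * t = t * x ^ B := by ring
      _ ≤ x := hmain
  have h2 : x ^ (B - 1) ≤ t⁻¹ := by
    rw [Real.rpow_sub hx, Real.rpow_one]
    have hdiv : x ^ B / x ≤ (x / t) / x := by gcongr
    calc x ^ B / x ≤ (x / t) / x := hdiv
      _ = t⁻¹ := by field_simp
  have hBm1 : 0 < B - 1 := hD
  have h3 : x ≤ (t⁻¹) ^ (B - 1)⁻¹ := by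
    have := Real.rpow_le_rpow (le_of_lt (Real.rpow_pos_of_pos hx (B-1))) h2
      (le_of_lt (inv_pos.mpr hBm1))
    rwa [← Real.rpow_mul (le_of_lt hx), mul_inv_cancel₀ (ne_of_gt hBm1),
      Real.rpow_one] at this
  have hfinal : (t⁻¹) ^ (B - 1)⁻¹ = c ^ (-(S k) / (B - 1)) * r ^ (-(A / (B - 1))) := by
    rw [Real.inv_rpow (le_of_lt ht), htdef,
        Real.mul_rpow (by positivity) (by positivity),
        ← Real.rpow_mul (le_of_lt hc), ← Real.rpow_mul (le_of_lt hr0), mul_inv,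
        ← Real.rpow_neg (le_of_lt hc), ← Real.rpow_neg (le_of_lt hr0)]
    have e1 : -(S k * (B - 1)⁻¹) = -(S k) / (B - 1) := by ring
    have e2 : -(2 * S k * (B - 1)⁻¹) = -(A / (B - 1)) := by rw [hA]; ring
    rw [e1, e2]
  calc x ≤ (t⁻¹) ^ (B - 1)⁻¹ := h3
    _ = c ^ (-(S k) / (B - 1)) * r ^ (-(A / (B - 1))) := hfinal
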